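/- For every positive integer n, the reduced factor complexity of the regular paperfolding sequence satisfies ρ_f^red(8n+1) = 4. -/
import Mathlib


/-- The reduction of a word: replace each maximal run of identical characters
by a single character. -/
def red {α : Type*} [DecidableEq α] (w : List α) : List α :=
  w.destutter (· ≠ ·)

/-- The length-`k` factor of the infinite sequence `x` (1-indexed) starting at
position `i`. -/
def factorAt {α : Type*} (x : ℕ → α) (i k : ℕ) : List α :=
  (List.range k).map (fun j => x (i + j))

/-- The reduced factor complexity: the number of length-`n` factors of `x`,
counted up to reduced-equivalence (`red v = red w`). -/
noncomputable def redFactorComplexity {α : Type*} [DecidableEq α]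
    (x : ℕ → α) (n : ℕ) : ℕ :=
  Set.ncard { u : List α | ∃ i ≥ 1, u = red (factorAt x i n) }

/-- The Thue–Morse sequence (1-indexed): `t n` is the parity of the number of
1's in the binary expansion of `n - 1`. -/
def thueMorse (n : ℕ) : Bool :=
  decide ((Nat.digits 2 (n - 1)).sum % 2 = 1)

/-- The number of alternations (occurrences of 01 or 10) in a binary word. -/
def alt (w : List Bool) : ℕ :=
  (List.zipWith (fun a b => a != b) w w.tail).count true

/-- The minimum number of alternations among length-`k` factors of Thue–Morse. -/
noncomputable def tmAltMin (k : ℕ) : ℕ :=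
  sInf { a : ℕ | ∃ i ≥ 1, a = alt (factorAt thueMorse i k) }

/-- The maximum number of alternations among length-`k` factors of Thue–Morse. -/
noncomputable def tmAltMax (k : ℕ) : ℕ :=
  sSup { a : ℕ | ∃ i ≥ 1, a = alt (factorAt thueMorse i k) }

/-- The Thue–Morse morphism `0 → 01`, `1 → 10`. -/
def mu (w : List Bool) : List Bool :=
  w.flatMap (fun b => if b then [true, false] else [false, true])

/-- The regular paperfolding sequence (1-indexed): writing `n = n' * 2^k` with
`n'` odd, `f n = 1` iff `n' ≡ 3 (mod 4)`. -/
def paperfold (n : ℕ) : Bool :=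
  decide ((n / 2 ^ (n.factorization 2)) % 4 = 3)

/-- The reduced abelian complexity: the number of length-`n` factors of `x`,
counted up to the equivalence identifying `v` and `w` whenever `red v` is a
rearrangement of the characters of `red w`. -/
noncomputable def redAbelianComplexity {α : Type*} [DecidableEq α]
    (x : ℕ → α) (n : ℕ) : ℕ :=
  Set.ncard { m : Multiset α | ∃ i ≥ 1, m = ↑(red (factorAt x i n)) }

lemma pf_odd (m : ℕ) : paperfold (2 * m + 1) = decide ((2 * m + 1) % 4 = 3) := by
  unfold paperfold
  rw [Nat.factorization_eq_zero_of_not_dvd (by omega)]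
  simp

lemma pf_even (m : ℕ) (hm : 1 ≤ m) : paperfold (2 * m) = paperfold m := by
  unfold paperfold
  have h2 : (2 * m).factorization 2 = m.factorization 2 + 1 := by
    rw [Nat.factorization_mul (by norm_num) (by omega)]
    simp [Nat.Prime.factorization Nat.prime_two, add_comm]
  rw [h2, pow_succ]
  congr 2
  rw [mul_comm (2 ^ m.factorization 2) 2, ← Nat.div_div_eq_div_mul,
    Nat.mul_div_cancel_left _ (by norm_num)]

lemma pf1 (k : ℕ) : paperfold (4 * k + 1) = false := by
  have : 4 * k + 1 = 2 * (2 * k) + 1 := by ring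
  rw [this, pf_odd]
  simp; omega

lemma pf3 (k : ℕ) : paperfold (4 * k + 3) = true := by
  have : 4 * k + 3 = 2 * (2 * k + 1) + 1 := by ring
  rw [this, pf_odd]
  simp; omega

lemma pf_pow (v x : ℕ) (hx : 1 ≤ x) : paperfold (2 ^ v * x) = paperfold x := by
  induction v with
  | zero => simp
  | succ v ih =>
    have : 2 ^ (v + 1) * x = 2 * (2 ^ v * x) := by ring
    rw [this, pf_even _ (Nat.one_le_iff_ne_zero.2 (by positivity)), ih]

/-- indicator of an alternation between positions j and j+1 -/
def G (j : ℕ) : ℕ := if paperfold j ≠ paperfold (j + 1) then 1 else 0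

def P (j : ℕ) : ℕ := if paperfold j then 1 else 0

lemma pf_odd' (k : ℕ) : paperfold (2 * k + 1) = decide (k % 2 = 1) := by
  rw [pf_odd]; congr 1; simp; omega

lemma G1 (k : ℕ) : G (4 * k + 1) = k % 2 := by
  unfold G
  have h1 : paperfold (4 * k + 1) = false := pf1 k
  have h2 : paperfold (4 * k + 1 + 1) = decide (k % 2 = 1) := by
    have e : 4 * k + 1 + 1 = 2 * (2 * k + 1) := by ring
    rw [e, pf_even _ (by omega), pf_odd']
  rw [h1, h2]
  rcases Nat.mod_two_eq_zero_or_one k with h | h <;> simp [h]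

lemma G2 (k : ℕ) : G (4 * k + 2) = 1 - k % 2 := by
  unfold G
  have h1 : paperfold (4 * k + 2) = decide (k % 2 = 1) := by
    have e : 4 * k + 2 = 2 * (2 * k + 1) := by ring
    rw [e, pf_even _ (by omega), pf_odd']
  have h2 : paperfold (4 * k + 2 + 1) = true := pf3 k
  rw [h1, h2]
  rcases Nat.mod_two_eq_zero_or_one k with h | h <;> simp [h]

lemma pf44 (k : ℕ) : paperfold (4 * k + 4) = paperfold (k + 1) := by
  have e : 4 * k + 4 = 2 * (2 * (k + 1)) := by ring
  rw [e, pf_even _ (by omega), pf_even _ (by omega)]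

lemma G3 (k : ℕ) : G (4 * k + 3) = 1 - P (k + 1) := by
  unfold G P
  have h1 : paperfold (4 * k + 3) = true := pf3 k
  have h2 : paperfold (4 * k + 3 + 1) = paperfold (k + 1) := by
    have e : 4 * k + 3 + 1 = 4 * k + 4 := by ring
    rw [e, pf44]
  rw [h1, h2]
  cases h : paperfold (k + 1) <;> simp

lemma G4 (k : ℕ) : G (4 * k + 4) = P (k + 1) := by
  unfold G P
  have h1 : paperfold (4 * k + 4) = paperfold (k + 1) := pf44 k
  have h2 : paperfold (4 * k + 4 + 1) = false := by
    have e : 4 * k + 4 + 1 = 4 * (k + 1) + 1 := by ring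
    rw [e, pf1]
  rw [h1, h2]
  cases h : paperfold (k + 1) <;> simp

def T (i m : ℕ) : ℕ := ∑ j ∈ Finset.range m, G (i + j)

lemma T_add (i a b : ℕ) : T i (a + b) = T i a + T (i + a) b := by
  unfold T
  rw [Finset.sum_range_add]
  congr 1
  apply Finset.sum_congr rfl
  intro j _
  congr 1
  omega

lemma T_block (k : ℕ) : T (4 * k + 1) 4 = 2 := by
  unfold T
  simp [Finset.sum_range_succ]
  have e2 : 4 * k + 1 + 1 = 4 * k + 2 := by ring
  have e3 : 4 * k + 1 + 2 = 4 * k + 3 := by ring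
  have e4 : 4 * k + 1 + 3 = 4 * k + 4 := by ring
  rw [e2, e3, e4, G1, G2, G3, G4]
  have := Nat.mod_two_eq_zero_or_one k
  have : P (k + 1) ≤ 1 := by unfold P; split <;> omega
  omega

lemma T_full (m k : ℕ) : T (4 * k + 1) (4 * m) = 2 * m := by
  induction m generalizing k with
  | zero => simp [T]
  | succ m ih =>
    have e : 4 * (m + 1) = 4 + 4 * m := by ring
    rw [e, T_add, T_block]
    have e2 : 4 * k + 1 + 4 = 4 * (k + 1) + 1 := by ring
    rw [e2, ih]
    ring

lemma P_le (j : ℕ) : P j ≤ 1 := by unfold P; split <;> omega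

lemma T1 (i : ℕ) : T i 1 = G i := by simp [T]
lemma T2 (i : ℕ) : T i 2 = G i + G (i + 1) := by simp [T, Finset.sum_range_succ]
lemma T3 (i : ℕ) : T i 3 = G i + G (i + 1) + G (i + 2) := by
  simp [T, Finset.sum_range_succ]

lemma T_r0 (q n : ℕ) : T (4 * q + 1) (8 * n) = 4 * n := by
  have e : 8 * n = 4 * (2 * n) := by ring
  rw [e, T_full]; ring

lemma T_r1 (q n : ℕ) (hn : 1 ≤ n) : T (4 * q + 2) (8 * n) = 4 * n := by
  have e : 8 * n = 3 + (4 * (2 * n - 1) + 1) := by omega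
  rw [e, T_add, T_add, T3]
  have e1 : 4 * q + 2 + 1 = 4 * q + 3 := by ring
  have e2 : 4 * q + 2 + 2 = 4 * q + 4 := by ring
  have e3 : 4 * q + 2 + 3 = 4 * (q + 1) + 1 := by ring
  have e4 : 4 * (q + 1) + 1 + 4 * (2 * n - 1) = 4 * (q + 2 * n) + 1 := by omega
  rw [e1, e2, e3, e4, T_full, T1, G2, G3, G4, G1]
  have h1 := P_le (q + 1)
  have h2 : (q + 2 * n) % 2 = q % 2 := by omega
  omega

lemma T_r2 (q n : ℕ) (hn : 1 ≤ n) : T (4 * q + 3) (8 * n) = 4 * n := by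
  have e : 8 * n = 2 + (4 * (2 * n - 1) + 2) := by omega
  rw [e, T_add, T_add, T2, T2]
  have e1 : 4 * q + 3 + 1 = 4 * q + 4 := by ring
  have e2 : 4 * q + 3 + 2 = 4 * (q + 1) + 1 := by ring
  have e3 : 4 * (q + 1) + 1 + 4 * (2 * n - 1) = 4 * (q + 2 * n) + 1 := by omega
  have e4 : 4 * (q + 2 * n) + 1 + 1 = 4 * (q + 2 * n) + 2 := by ring
  rw [e1, e2, e3, e4, T_full, G3, G4, G1, G2]
  have h1 := P_le (q + 1)
  omega

lemma T_r3 (q n : ℕ) (hn : 1 ≤ n) :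
    T (4 * q + 4) (8 * n) + P (q + 2 * n + 1) = 4 * n + P (q + 1) := by
  have e : 8 * n = 1 + (4 * (2 * n - 1) + 3) := by omega
  rw [e, T_add, T_add, T1, T3]
  have e1 : 4 * q + 4 + 1 = 4 * (q + 1) + 1 := by ring
  have e2 : 4 * (q + 1) + 1 + 4 * (2 * n - 1) = 4 * (q + 2 * n) + 1 := by omega
  have e3 : 4 * (q + 2 * n) + 1 + 1 = 4 * (q + 2 * n) + 2 := by ring
  have e4 : 4 * (q + 2 * n) + 1 + 2 = 4 * (q + 2 * n) + 3 := by ring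
  rw [e1, e2, e3, e4, T_full, G4, G1, G2, G3]
  have h1 := P_le (q + 2 * n + 1)
  have h2 : q + 2 * n + 1 = (q + 2 * n) + 1 := by ring
  rw [← h2]
  omega

lemma factor_cons {α : Type*} (x : ℕ → α) (i k : ℕ) :
    factorAt x i (k + 1) = x i :: factorAt x (i + 1) k := by
  unfold factorAt
  rw [List.range_succ_eq_map]
  simp [List.map_map, Function.comp]
  intro j _
  congr 1
  omega

lemma alt_cons_cons (a b : Bool) (l : List Bool) :
    alt (a :: b :: l) = (if a ≠ b then 1 else 0) + alt (b :: l) := by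
  unfold alt
  simp [List.count_cons]
  cases a <;> cases b <;> simp <;> omega

lemma alt_factor (x : ℕ → Bool) (k : ℕ) : ∀ i, alt (factorAt x i (k + 1)) =
    ∑ j ∈ Finset.range k, (if x (i + j) ≠ x (i + j + 1) then 1 else 0) := by
  induction k with
  | zero => intro i; simp [factorAt, alt, List.range_succ]
  | succ k ih =>
    intro i
    rw [factor_cons, factor_cons, alt_cons_cons, ← factor_cons, ih]
    rw [Finset.sum_range_succ']
    simp only [add_zero]
    have : ∀ j, x (i + 1 + j) = x (i + (j + 1)) := by intro j; congr 1; omega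
    have e : ∑ j ∈ Finset.range k, (if x (i + 1 + j) ≠ x (i + 1 + j + 1) then 1 else 0)
        = ∑ j ∈ Finset.range k, (if x (i + (j + 1)) ≠ x (i + (j + 1) + 1) then 1 else 0) := by
      apply Finset.sum_congr rfl
      intro j _
      have e1 : i + 1 + j = i + (j + 1) := by omega
      rw [e1]
    omega

def altList (b : Bool) : ℕ → List Bool
  | 0 => []
  | k + 1 => b :: altList (!b) k

lemma red_eq_altList : ∀ (l : List Bool) (a : Bool),
    red (a :: l) = altList a (alt (a :: l) + 1) := by
  intro l
  induction l with
  | nil => intro a; simp [red, alt, altList, List.destutter]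
  | cons b l ih =>
    intro a
    by_cases hab : a = b
    · subst hab
      have h1 : red (a :: a :: l) = red (a :: l) := by
        simp [red, List.destutter_cons_cons]
        rfl
      have h2 : alt (a :: a :: l) = alt (a :: l) := by
        rw [alt_cons_cons]; simp
      rw [h1, h2, ih]
    · have h1 : red (a :: b :: l) = a :: red (b :: l) := by
        simp [red, List.destutter_cons_cons, hab]
        rfl
      have h2 : alt (a :: b :: l) = alt (b :: l) + 1 := by
        rw [alt_cons_cons]; simp [hab]; omega
      have hb : b = !a := by cases a <;> cases b <;> simp_all
      rw [h1, h2, ih, hb]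
      rfl

lemma altList_length (b : Bool) (k : ℕ) : (altList b k).length = k := by
  induction k generalizing b with
  | zero => rfl
  | succ k ih => simp [altList, ih]

lemma altList_ne_len {b c : Bool} {k l : ℕ} (h : k ≠ l) : altList b k ≠ altList c l := by
  intro he
  exact h (by rw [← altList_length b k, ← altList_length c l, he])

lemma altList_ne_head (k l : ℕ) : altList false (k + 1) ≠ altList true (l + 1) := by
  intro h
  have := congrArg List.head? h
  simp [altList] at this

lemma red_factor (i n : ℕ) :
    red (factorAt paperfold i (8 * n + 1)) = altList (paperfold i) (T i (8 * n) + 1) := by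
  rw [factor_cons, red_eq_altList, ← factor_cons, alt_factor]
  rfl

lemma T_char (i n : ℕ) (hi : 1 ≤ i) (hn : 1 ≤ n) :
    altList (paperfold i) (T i (8 * n) + 1) = altList false (4 * n) ∨
    altList (paperfold i) (T i (8 * n) + 1) = altList false (4 * n + 1) ∨
    altList (paperfold i) (T i (8 * n) + 1) = altList true (4 * n + 1) ∨
    altList (paperfold i) (T i (8 * n) + 1) = altList true (4 * n + 2) := by
  obtain ⟨q, r, hr, rfl⟩ : ∃ q r, r < 4 ∧ i = 4 * q + 1 + r :=
    ⟨(i - 1) / 4, (i - 1) % 4, by omega, by omega⟩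
  interval_cases r
  · -- r = 0
    simp only [add_zero]
    rw [T_r0, pf1]
    right; left; rfl
  · -- r = 1
    have e : 4 * q + 1 + 1 = 4 * q + 2 := by ring
    rw [e, T_r1 q n hn]
    cases paperfold (4 * q + 2)
    · right; left; rfl
    · right; right; left; rfl
  · -- r = 2
    have e : 4 * q + 1 + 2 = 4 * q + 3 := by ring
    rw [e, T_r2 q n hn, pf3]
    right; right; left; rfl
  · -- r = 3
    have e : 4 * q + 1 + 3 = 4 * q + 4 := by ring
    rw [e, pf44]
    have h3 := T_r3 q n hn
    cases h1 : paperfold (q + 1) <;> cases h2 : paperfold (q + 2 * n + 1) <;>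
      simp only [P, h1, h2, if_true, if_false, Bool.false_eq_true,
        Bool.true_eq_false] at h3 <;>
    [skip; skip; skip; skip]
    · -- T = 4n
      have : T (4 * q + 4) (8 * n) = 4 * n := by omega
      rw [this]; right; left; rfl
    · -- T + 1 = 4n → T = 4n - 1, list len = 4n
      have : T (4 * q + 4) (8 * n) + 1 = 4 * n := by omega
      left; rw [← this]
    · have : T (4 * q + 4) (8 * n) = 4 * n + 1 := by omega
      rw [this]; right; right; right; rfl
    · have : T (4 * q + 4) (8 * n) = 4 * n := by omega
      rw [this]; right; right; left; rfl

lemma exists_w2 (n : ℕ) :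
    altList (paperfold 1) (T 1 (8 * n) + 1) = altList false (4 * n + 1) := by
  have h1 : paperfold 1 = false := by have := pf1 0; simpa using this
  have h2 : T 1 (8 * n) = 4 * n := by have := T_r0 0 n; simpa using this
  rw [h1, h2]

lemma exists_w3 (n : ℕ) (hn : 1 ≤ n) :
    altList (paperfold 3) (T 3 (8 * n) + 1) = altList true (4 * n + 1) := by
  have h1 : paperfold 3 = true := by have := pf3 0; simpa using this
  have h2 : T 3 (8 * n) = 4 * n := by have := T_r2 0 n hn; simpa using this
  rw [h1, h2]

lemma exists_w4 (n : ℕ) (hn : 1 ≤ n) : ∃ i, 1 ≤ i ∧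
    altList (paperfold i) (T i (8 * n) + 1) = altList true (4 * n + 2) := by
  obtain ⟨v, m, hm, rfl⟩ := Nat.exists_eq_two_pow_mul_odd (n := n) (by omega)
  set q : ℕ := 3 * 2 ^ v - 1 with hq
  have hq1 : q + 1 = 2 ^ v * 3 := by
    have : 1 ≤ 2 ^ v := Nat.one_le_two_pow
    omega
  refine ⟨4 * q + 4, by omega, ?_⟩
  have hp1 : paperfold (q + 1) = true := by
    rw [hq1, pf_pow _ _ (by omega)]
    have := pf3 0; simpa using this
  have hp2 : paperfold (q + 2 * (2 ^ v * m) + 1) = false := by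
    have e : q + 2 * (2 ^ v * m) + 1 = 2 ^ v * (2 * (m + 1) + 1) := by
      have : 1 ≤ 2 ^ v := Nat.one_le_two_pow
      ring_nf
      omega
    rw [e, pf_pow _ _ (by omega), pf_odd]
    obtain ⟨t, rfl⟩ := hm
    simp; omega
  have h3 := T_r3 q (2 ^ v * m) hn
  simp only [P, hp1, hp2, if_true, if_false, Bool.false_eq_true] at h3
  have hT : T (4 * q + 4) (8 * (2 ^ v * m)) = 4 * (2 ^ v * m) + 1 := by omega
  rw [pf44, hp1, hT]

lemma exists_w1 (n : ℕ) (hn : 1 ≤ n) : ∃ i, 1 ≤ i ∧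
    altList (paperfold i) (T i (8 * n) + 1) = altList false (4 * n) := by
  obtain ⟨v, m, hm, rfl⟩ := Nat.exists_eq_two_pow_mul_odd (n := n) (by omega)
  set q : ℕ := 2 ^ v - 1 with hq
  have hq1 : q + 1 = 2 ^ v * 1 := by
    have : 1 ≤ 2 ^ v := Nat.one_le_two_pow
    omega
  refine ⟨4 * q + 4, by omega, ?_⟩
  have hp1 : paperfold (q + 1) = false := by
    rw [hq1, pf_pow _ _ (by omega)]
    have := pf1 0; simpa using this
  have hp2 : paperfold (q + 2 * (2 ^ v * m) + 1) = true := by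
    have e : q + 2 * (2 ^ v * m) + 1 = 2 ^ v * (2 * m + 1) := by
      have : 1 ≤ 2 ^ v := Nat.one_le_two_pow
      ring_nf
      omega
    rw [e, pf_pow _ _ (by omega), pf_odd]
    obtain ⟨t, rfl⟩ := hm
    simp; omega
  have h3 := T_r3 q (2 ^ v * m) hn
  simp only [P, hp1, hp2, if_true, if_false, Bool.false_eq_true] at h3
  have hT : T (4 * q + 4) (8 * (2 ^ v * m)) + 1 = 4 * (2 ^ v * m) := by omega
  rw [pf44, hp1, hT]

theorem stmt14 (n : ℕ) (hn : 1 ≤ n) :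
    redFactorComplexity paperfold (8 * n + 1) = 4 := by
  have hS : { u : List Bool | ∃ i ≥ 1, u = red (factorAt paperfold i (8 * n + 1)) }
      = {altList false (4 * n), altList false (4 * n + 1),
         altList true (4 * n + 1), altList true (4 * n + 2)} := by
    ext u
    simp only [Set.mem_setOf_eq, Set.mem_insert_iff, Set.mem_singleton_iff, ge_iff_le]
    constructor
    · rintro ⟨i, hi, rfl⟩
      rw [red_factor]
      exact T_char i n hi hn
    · rintro (rfl | rfl | rfl | rfl)
      · obtain ⟨i, hi, h⟩ := exists_w1 n hn
        exact ⟨i, hi, by rw [red_factor, h]⟩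
      · exact ⟨1, le_refl 1, by rw [red_factor, exists_w2]⟩
      · exact ⟨3, by omega, by rw [red_factor, exists_w3 n hn]⟩
      · obtain ⟨i, hi, h⟩ := exists_w4 n hn
        exact ⟨i, hi, by rw [red_factor, h]⟩
  rw [redFactorComplexity, hS]
  rw [Set.ncard_insert_of_notMem, Set.ncard_insert_of_notMem, Set.ncard_pair]
  · exact altList_ne_len (by omega)
  · simp only [Set.mem_insert_iff, Set.mem_singleton_iff]
    push_neg
    exact ⟨altList_ne_head (4 * n) (4 * n), altList_ne_len (by omega)⟩
  · simp only [Set.mem_insert_iff, Set.mem_singleton_iff]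
    push_neg
    exact ⟨altList_ne_len (by omega), altList_ne_len (by omega), altList_ne_len (by omega)⟩
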